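/- Let G be a properly edge-coloured graph on n vertices and b ≥ 1 an integer. Suppose: T is a rainbow tree in G with exactly n−1 vertices; v is the vertex of G outside V(T) and v has degree at least n/2 + b in G; c is a colour not appearing on T such that G has at least b edges of colour c; and H is a subgraph of G with vertex set contained in V(T), edge-disjoint from T, such that for every set S of b colours from C(T), at least n − 2b vertices are covered by edges of H whose colour lies in S. Then there is a rainbow tree T′ whose edges all lie in E(T) ∪ E(H) ∪ E(c) ∪ E(v), with V(T′) = V(T) ∪ {v}, with at most 3 edges of T′ outside E(T), and with v having degree exactly 1 in T′. -/

import Mathlib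

open SimpleGraph Finset

set_option linter.unusedSectionVars false

variable {V : Type*} [DecidableEq V]

abbrev FG (A : Finset (Sym2 V)) : SimpleGraph V := SimpleGraph.fromEdgeSet (↑A : Set (Sym2 V))
abbrev FR (A : Finset (Sym2 V)) : V → V → Prop := (FG A).Reachable

lemma lmono {A B : Finset (Sym2 V)} (h : A ⊆ B) {x y : V}
    (hr : FR A x y) : FR B x y :=
  hr.mono (SimpleGraph.fromEdgeSet_mono (by exact_mod_cast h))

lemma ladj {A : Finset (Sym2 V)} {x y : V} (h : s(x, y) ∈ A) (hne : x ≠ y) :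
    (FG A).Adj x y := by
  rw [SimpleGraph.fromEdgeSet_adj]; exact ⟨by exact_mod_cast h, hne⟩

lemma lisolated {A : Finset (Sym2 V)} {v x : V} (hA : ∀ e ∈ A, v ∉ e)
    (h : FR A v x) : v = x := by
  obtain ⟨w⟩ := h
  cases w with
  | nil => rfl
  | cons h p =>
    rw [SimpleGraph.fromEdgeSet_adj] at h
    exact absurd (Sym2.mem_mk_left _ _) (hA _ (by exact_mod_cast h.1))

/-- decompose reachability over one extra edge -/
lemma lM {A : Finset (Sym2 V)} {a b x y : V}
    (h : FR (insert s(a, b) A) x y) :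
    FR A x y ∨ (FR A x a ∧ FR A b y) ∨ (FR A x b ∧ FR A a y) := by
  obtain ⟨w⟩ := h
  induction w with
  | nil => exact Or.inl (Reachable.refl _)
  | @cons x z y h p ih =>
    rw [SimpleGraph.fromEdgeSet_adj] at h
    obtain ⟨hmem, hne⟩ := h
    rw [Finset.coe_insert, Set.mem_insert_iff] at hmem
    rcases hmem with heq | hmem
    · rw [Sym2.eq_iff] at heq
      rcases heq with ⟨rfl, rfl⟩ | ⟨rfl, rfl⟩
      · -- x = a, z = b
        rcases ih with h1 | ⟨h1, h2⟩ | ⟨h1, h2⟩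
        · exact Or.inr (Or.inl ⟨Reachable.refl _, h1⟩)
        · exact Or.inr (Or.inl ⟨Reachable.refl _, h2⟩)
        · exact Or.inl h2
      · -- x = b, z = a
        rcases ih with h1 | ⟨h1, h2⟩ | ⟨h1, h2⟩
        · exact Or.inr (Or.inr ⟨Reachable.refl _, h1⟩)
        · exact Or.inl h2
        · exact Or.inr (Or.inr ⟨Reachable.refl _, h2⟩)
    · have hxz : FR A x z := (ladj (by exact_mod_cast hmem) hne).reachable
      rcases ih with h1 | ⟨h1, h2⟩ | ⟨h1, h2⟩
      · exact Or.inl (hxz.trans h1)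
      · exact Or.inr (Or.inl ⟨hxz.trans h1, h2⟩)
      · exact Or.inr (Or.inr ⟨hxz.trans h1, h2⟩)

lemma lcut {A : Finset (Sym2 V)} (hac : (FG A).IsAcyclic) {x y : V}
    (hmem : s(x, y) ∈ A) (hne : x ≠ y) : ¬ FR (A.erase s(x, y)) x y := by
  rintro ⟨w⟩
  have hsub : ∀ e ∈ w.edges, e ∈ (FG A).edgeSet := by
    intro e he
    have := w.edges_subset_edgeSet he
    rw [SimpleGraph.edgeSet_fromEdgeSet] at this ⊢
    exact ⟨by exact_mod_cast Finset.mem_of_mem_erase (by exact_mod_cast this.1), this.2⟩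
  have hnotin : ∀ e ∈ w.edges, e ≠ s(x, y) := by
    intro e he
    have := w.edges_subset_edgeSet he
    rw [SimpleGraph.edgeSet_fromEdgeSet] at this
    have := this.1
    norm_cast at this
    exact Finset.ne_of_mem_erase this
  set w' := w.transfer (FG A) hsub with hw'
  set π := w'.toPath with hπ
  have hedges : s(y, x) ∉ (π : (FG A).Walk x y).edges := by
    intro hcon
    have h1 := SimpleGraph.Walk.edges_toPath_subset w' hcon
    rw [SimpleGraph.Walk.edges_transfer] at h1
    exact hnotin _ h1 (Sym2.eq_swap)
  have hcyc := SimpleGraph.Path.cons_isCycle π ((ladj hmem hne).symm) hedges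
  exact hac _ hcyc

lemma lfirstEdge {A : Finset (Sym2 V)} (hac : (FG A).IsAcyclic) {x y : V}
    (h : FR A x y) (hne : x ≠ y) :
    ∃ g ∈ A, x ∈ g ∧ ¬ FR (A.erase g) x y := by
  obtain ⟨w0⟩ := h
  set π := w0.toPath with hπ
  obtain ⟨w, hw⟩ := π
  cases w with
  | nil => exact absurd rfl hne
  | @cons x t y hadj p =>
    rw [SimpleGraph.fromEdgeSet_adj] at hadj
    obtain ⟨hmemA, hxt⟩ := hadj
    refine ⟨s(x, t), by exact_mod_cast hmemA, Sym2.mem_mk_left _ _, ?_⟩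
    intro hreach
    have htrail : (SimpleGraph.Walk.cons (ladj (by exact_mod_cast hmemA) hxt) p).IsTrail :=
      hw.isTrail
    rw [SimpleGraph.Walk.isTrail_cons] at htrail
    have hp_edges : ∀ e ∈ p.edges, e ∈ (FG (A.erase s(x, t))).edgeSet := by
      intro e he
      have h1 := p.edges_subset_edgeSet he
      rw [SimpleGraph.edgeSet_fromEdgeSet] at h1 ⊢
      refine ⟨?_, h1.2⟩
      have : e ∈ A := by exact_mod_cast h1.1
      have hne' : e ≠ s(x, t) := fun hcon => htrail.2 (hcon ▸ he)
      exact_mod_cast Finset.mem_erase.mpr ⟨hne', this⟩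
    have hty : FR (A.erase s(x, t)) t y := ⟨p.transfer _ hp_edges⟩
    have : FR (A.erase s(x, t)) x t := hreach.trans hty.symm
    exact lcut hac (by exact_mod_cast hmemA) hxt this

lemma lacyclic_of_bridges {A : Finset (Sym2 V)}
    (H : ∀ x y : V, s(x, y) ∈ A → x ≠ y → ¬ FR (A.erase s(x, y)) x y) :
    (FG A).IsAcyclic := by
  rw [SimpleGraph.isAcyclic_iff_forall_adj_isBridge]
  intro x y hadj
  have hadj' := hadj
  rw [SimpleGraph.fromEdgeSet_adj] at hadj'
  rw [SimpleGraph.isBridge_iff]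
  refine fun hreach => ?_
  have hle : (FG A \ SimpleGraph.fromEdgeSet {s(x, y)}) ≤ FG (A.erase s(x, y)) := by
    intro a b hab
    rw [SimpleGraph.sdiff_adj, SimpleGraph.fromEdgeSet_adj, SimpleGraph.fromEdgeSet_adj] at hab
    rw [SimpleGraph.fromEdgeSet_adj]
    obtain ⟨⟨h1, h2⟩, h3⟩ := hab
    refine ⟨?_, h2⟩
    have : s(a, b) ≠ s(x, y) := fun hcon => h3 ⟨by rw [hcon]; rfl, h2⟩
    exact_mod_cast Finset.mem_erase.mpr ⟨this, by exact_mod_cast h1⟩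
  exact H x y (by exact_mod_cast hadj'.1) hadj'.2 (hreach.mono hle)

lemma ldropleaf {A : Finset (Sym2 V)} {v u x y : V} (hA : ∀ e ∈ A, v ∉ e)
    (hx : x ≠ v) (hy : y ≠ v) (h : FR (insert s(v, u) A) x y) : FR A x y := by
  rcases lM h with h1 | ⟨h1, h2⟩ | ⟨h1, h2⟩
  · exact h1
  · exact absurd (lisolated hA h1.symm).symm hx
  · exact absurd (lisolated hA h2) (Ne.symm hy)

lemma lleaf_acyclic {A : Finset (Sym2 V)} {v u : V} (hAv : ∀ e ∈ A, v ∉ e)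
    (hac : (FG A).IsAcyclic) (hvu : v ≠ u) :
    (FG (insert s(v, u) A)).IsAcyclic := by
  apply lacyclic_of_bridges
  intro x y hmem hne hreach
  rcases Finset.mem_insert.mp hmem with heq | hmem'
  · have hsub : (insert s(v, u) A).erase s(x, y) ⊆ A := by
      intro e he
      rcases Finset.mem_insert.mp (Finset.mem_of_mem_erase he) with h1 | h1
      · exact absurd (h1.trans heq.symm) (Finset.ne_of_mem_erase he)
      · exact h1
    have hreach2 := lmono hsub hreach
    rw [Sym2.eq_iff] at heq
    rcases heq with ⟨rfl, rfl⟩ | ⟨rfl, rfl⟩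
    · exact hne (lisolated hAv hreach2)
    · exact hne (lisolated hAv hreach2.symm).symm
  · have hxv : x ≠ v := fun hcon => hAv _ hmem' (hcon ▸ Sym2.mem_mk_left _ _)
    have hyv : y ≠ v := fun hcon => hAv _ hmem' (hcon ▸ Sym2.mem_mk_right _ _)
    have hsub : (insert s(v, u) A).erase s(x, y) ⊆ insert s(v, u) (A.erase s(x, y)) := by
      intro e he
      rcases Finset.mem_insert.mp (Finset.mem_of_mem_erase he) with h1 | h1
      · exact h1 ▸ Finset.mem_insert_self _ _
      · exact Finset.mem_insert_of_mem (Finset.mem_erase.mpr ⟨Finset.ne_of_mem_erase he, h1⟩)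
    have hreach2 := ldropleaf (fun e he => hAv _ (Finset.mem_of_mem_erase he)) hxv hyv
      (lmono hsub hreach)
    exact lcut hac hmem' hne hreach2

lemma lcard_tree [Fintype V] {A : Finset (Sym2 V)} {v : V}
    (hAv : ∀ e ∈ A, v ∉ e) (hdiag : ∀ e ∈ A, ¬ e.IsDiag)
    (hconn : ∀ x y : V, x ≠ v → y ≠ v → FR A x y)
    (hac : (FG A).IsAcyclic) (u₀ : V) (hu₀ : u₀ ≠ v) :
    A.card + 2 = Fintype.card V := by
  set A' := insert s(v, u₀) A with hA'
  have hvu₀ : s(v, u₀) ∉ A := fun hcon => hAv _ hcon (Sym2.mem_mk_left _ _)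
  have hconn' : (FG A').Connected := by
    have hx : ∀ x : V, FR A' x u₀ := by
      intro x
      by_cases hxv : x = v
      · subst hxv
        exact (ladj (Finset.mem_insert_self _ _) (Ne.symm hu₀)).reachable
      · exact lmono (Finset.subset_insert _ _) (hconn x u₀ hxv hu₀)
    haveI : Nonempty V := ⟨v⟩
    rw [SimpleGraph.connected_iff]
    exact ⟨fun x y => (hx x).trans (hx y).symm, inferInstance⟩
  have hac' : (FG A').IsAcyclic := lleaf_acyclic hAv hac (Ne.symm hu₀)
  have htree : (FG A').IsTree := ⟨hconn', hac'⟩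
  letI : Fintype ((FG A').edgeSet) :=
    (Set.Finite.subset A'.finite_toSet
      (by rw [SimpleGraph.edgeSet_fromEdgeSet]; exact Set.diff_subset)).fintype
  have hcard := htree.card_edgeFinset
  have hedge : (FG A').edgeSet = ↑A' := by
    rw [SimpleGraph.edgeSet_fromEdgeSet]
    ext e
    simp only [Set.mem_diff, Set.mem_setOf_eq, and_iff_left_iff_imp]
    intro he hd
    have he' : e ∈ A' := by exact_mod_cast he
    rcases Finset.mem_insert.mp he' with h1 | h1
    · subst h1; exact absurd hd (by simp [Sym2.isDiag_iff_proj_eq, Ne.symm hu₀])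
    · exact absurd hd (hdiag _ h1)
  have : (FG A').edgeFinset = A' := by
    rw [SimpleGraph.edgeFinset, Set.toFinset_congr hedge]
    exact Finset.toFinset_coe A'
  rw [this, Finset.card_insert_of_notMem hvu₀] at hcard
  omega

/-- endpoint finset of an edge -/
def eset [Fintype V] (e : Sym2 V) : Finset V := Finset.univ.filter (· ∈ e)

lemma eset_pair [Fintype V] {x y : V} : eset s(x, y) = {x, y} := by
  ext t; simp [eset, Sym2.mem_iff]

lemma eset_card_le [Fintype V] (e : Sym2 V) : (eset e).card ≤ 2 := by
  induction e with
  | _ x y =>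
    rw [eset_pair]
    exact (Finset.card_insert_le _ _).trans (by simp)

lemma eset_card_eq [Fintype V] {e : Sym2 V} (h : ¬ e.IsDiag) : (eset e).card = 2 := by
  induction e with
  | _ x y =>
    rw [Sym2.mk_isDiag_iff] at h
    rw [eset_pair, Finset.card_insert_of_notMem (by simpa using h), Finset.card_singleton]

lemma mem_eset [Fintype V] {e : Sym2 V} {x : V} : x ∈ eset e ↔ x ∈ e := by
  simp [eset]

lemma card_biUnion_eset_le [Fintype V] (B : Finset (Sym2 V)) :
    (B.biUnion eset).card ≤ 2 * B.card := by
  calc (B.biUnion eset).card ≤ ∑ e ∈ B, (eset e).card := Finset.card_biUnion_le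
  _ ≤ ∑ _e ∈ B, 2 := Finset.sum_le_sum (fun e _ => eset_card_le e)
  _ = 2 * B.card := by rw [Finset.sum_const, smul_eq_mul, mul_comm]

lemma sym2_rep (e : Sym2 V) : ∃ p q : V, e = s(p, q) := by
  induction e with
  | _ p q => exact ⟨p, q, rfl⟩

/-- Extending a rainbow tree by one vertex. In a properly edge-coloured
graph `G` on `n` vertices: given a rainbow tree `T` (edges `TE`, vertex set `TV`) with `n-1`
vertices, the vertex `v` outside `T` of degree `≥ n/2 + b`, a colour `c₀` not on `T` with at
least `b` edges, and a subgraph `H` (edges `HE`) on `V(T)`, edge-disjoint from `T`, in which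
every set of `b` colours of `C(T)` covers at least `n - 2b` vertices, there is a rainbow tree
`T'` in `T ∪ H ∪ E(c₀) ∪ E(v)` spanning `V(T) ∪ {v}`, with at most `3` edges outside `T` and
with `v` of degree `1`. -/
theorem statement_19 :
    ∀ n b : ℕ, 1 ≤ b →
    ∀ (G : SimpleGraph (Fin n)) [inst : DecidableRel G.Adj] (c : Sym2 (Fin n) → ℕ),
      (∀ e ∈ G.edgeFinset, ∀ f ∈ G.edgeFinset, e ≠ f →
        (∃ u, u ∈ e ∧ u ∈ f) → c e ≠ c f) →
      ∀ (TE HE : Finset (Sym2 (Fin n))) (TV : Finset (Fin n)) (v : Fin n) (c₀ : ℕ),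
        (∀ e ∈ TE, e ∈ G.edgeFinset) →
        (∀ e ∈ TE, ∀ u, u ∈ e → u ∈ TV) →
        (∀ u ∈ TV, ∀ w ∈ TV,
          (SimpleGraph.fromEdgeSet (↑TE : Set (Sym2 (Fin n)))).Reachable u w) →
        (SimpleGraph.fromEdgeSet (↑TE : Set (Sym2 (Fin n)))).IsAcyclic →
        Set.InjOn c ↑TE →
        TV.card = n - 1 →
        v ∉ TV →
        (n : ℝ) / 2 + b ≤ (G.degree v : ℝ) →
        c₀ ∉ TE.image c →
        b ≤ (G.edgeFinset.filter (fun e => c e = c₀)).card →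
        (∀ e ∈ HE, e ∈ G.edgeFinset) →
        (∀ e ∈ HE, ∀ u, u ∈ e → u ∈ TV) →
        Disjoint HE TE →
        (∀ S : Finset ℕ, S ⊆ TE.image c → S.card = b →
          (n : ℝ) - 2 * b ≤
            (((Finset.univ : Finset (Fin n)).filter
              (fun u => ∃ e ∈ HE, u ∈ e ∧ c e ∈ S)).card : ℝ)) →
        ∃ TE' : Finset (Sym2 (Fin n)),
          (∀ e ∈ TE', e ∈ TE ∨ e ∈ HE ∨ (e ∈ G.edgeFinset ∧ c e = c₀) ∨
            (e ∈ G.edgeFinset ∧ v ∈ e)) ∧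
          (∀ e ∈ TE', ∀ u, u ∈ e → u ∈ insert v TV) ∧
          (∀ u ∈ insert v TV, ∀ w ∈ insert v TV,
            (SimpleGraph.fromEdgeSet (↑TE' : Set (Sym2 (Fin n)))).Reachable u w) ∧
          (SimpleGraph.fromEdgeSet (↑TE' : Set (Sym2 (Fin n)))).IsAcyclic ∧
          Set.InjOn c ↑TE' ∧
          (TE' \ TE).card ≤ 3 ∧
          (TE'.filter (fun e => v ∈ e)).card = 1 := by
  intro n b hb G inst c hproper TE HE TV v c₀ hTEG hTEV hTconn hTacyc hTinj hTVcard hvTV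
    hdeg hc₀TE hc₀b hHEG hHEV hdisj hcover
  classical
  have hn : Fintype.card (Fin n) = n := Fintype.card_fin n
  -- TV is everything but v
  have hTVsub : TV ⊆ Finset.univ.erase v := fun x hx =>
    Finset.mem_erase.mpr ⟨fun hc => hvTV (hc ▸ hx), Finset.mem_univ x⟩
  have hTV : TV = Finset.univ.erase v := by
    apply Finset.eq_of_subset_of_card_le hTVsub
    rw [Finset.card_erase_of_mem (Finset.mem_univ v), Finset.card_univ, hn, hTVcard]
  have hmemTV : ∀ x : Fin n, x ≠ v → x ∈ TV := by
    intro x hx; rw [hTV]; exact Finset.mem_erase.mpr ⟨hx, Finset.mem_univ x⟩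
  have hinsTV : insert v TV = Finset.univ := by rw [hTV, Finset.insert_erase (Finset.mem_univ v)]
  have hTEv : ∀ e ∈ TE, v ∉ e := fun e he hv => hvTV (hTEV e he v hv)
  have hHEv : ∀ e ∈ HE, v ∉ e := fun e he hv => hvTV (hHEV e he v hv)
  have hTEdiag : ∀ e ∈ TE, ¬ e.IsDiag := fun e he =>
    (SimpleGraph.not_isDiag_of_mem_edgeSet G (SimpleGraph.mem_edgeFinset.mp (hTEG e he)))
  -- proper colouring restated
  have hprop : ∀ e ∈ G.edgeFinset, ∀ f ∈ G.edgeFinset, c e = c f →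
      (∃ u, u ∈ e ∧ u ∈ f) → e = f := by
    intro e he f hf hcef hshare
    by_contra hne
    exact hproper e he f hf hne hshare hcef
  -- degree
  set N := G.neighborFinset v with hN
  have hNcard : N.card = G.degree v := G.card_neighborFinset_eq_degree v
  have hNreal : (n : ℝ) / 2 + b ≤ (N.card : ℝ) := by rw [hNcard]; exact hdeg
  have hdegn : G.degree v < n := by
    have := G.degree_lt_card_verts v; rwa [hn] at this
  have hNn : (N.card : ℝ) ≤ (n : ℝ) - 1 := by
    rw [hNcard]
    have : (G.degree v : ℝ) + 1 ≤ (n : ℝ) := by exact_mod_cast hdegn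
    linarith
  have hnb : 2 * b + 2 ≤ n := by
    have h2 : (2 * b + 2 : ℝ) ≤ (n : ℝ) := by linarith
    exact_mod_cast h2
  have hb4 : 4 ≤ n := by omega
  -- connectivity restated
  have hTconn' : ∀ x y : Fin n, x ≠ v → y ≠ v → FR TE x y := fun x y hx hy =>
    hTconn x (hmemTV x hx) y (hmemTV y hy)
  -- tree edge count
  obtain ⟨u₀, hu₀⟩ : ∃ u₀, u₀ ∈ TV := Finset.card_pos.mp (by rw [hTVcard]; omega)
  have hu₀v : u₀ ≠ v := fun hc => hvTV (hc ▸ hu₀)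
  have hTEcard : TE.card + 2 = n := by
    have := lcard_tree hTEv hTEdiag hTconn' hTacyc u₀ hu₀v
    rwa [hn] at this
  -- case split: an edge at v with a colour not on the tree
  by_cases hA : ∃ u ∈ N, c s(v, u) ∉ TE.image c
  · -- Case A: attach v directly
    obtain ⟨u, huN, hcu⟩ := hA
    have hadj : G.Adj v u := by rwa [SimpleGraph.mem_neighborFinset] at huN
    have hvu : v ≠ u := G.ne_of_adj hadj
    have he₀G : s(v, u) ∈ G.edgeFinset := SimpleGraph.mem_edgeFinset.mpr hadj
    have he₀TE : s(v, u) ∉ TE := fun hc => hTEv _ hc (Sym2.mem_mk_left _ _)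
    refine ⟨insert s(v, u) TE, ?_, ?_, ?_, ?_, ?_, ?_, ?_⟩
    · intro e he
      rcases Finset.mem_insert.mp he with rfl | he'
      · exact Or.inr (Or.inr (Or.inr ⟨he₀G, Sym2.mem_mk_left _ _⟩))
      · exact Or.inl he'
    · intro e _ x _; rw [hinsTV]; exact Finset.mem_univ x
    · intro x _ y _
      have key : ∀ z : Fin n, FR (insert s(v, u) TE) z u := by
        intro z
        by_cases hz : z = v
        · subst hz; exact (ladj (Finset.mem_insert_self _ _) hvu).reachable
        · exact lmono (Finset.subset_insert _ _) (hTconn' z u hz (Ne.symm hvu))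
      exact (key x).trans (key y).symm
    · exact lleaf_acyclic hTEv hTacyc hvu
    · intro a ha b hb' hab
      rw [Finset.coe_insert, Set.mem_insert_iff] at ha hb'
      rcases ha with rfl | ha <;> rcases hb' with rfl | hb'
      · rfl
      · exact absurd (hab ▸ Finset.mem_image_of_mem c (by exact_mod_cast hb')) hcu
      · exact absurd (hab ▸ Finset.mem_image_of_mem c (show a ∈ TE by exact_mod_cast ha) :
          c s(v, u) ∈ TE.image c) hcu
      · exact hTinj ha hb' hab
    · calc (insert s(v, u) TE \ TE).card ≤ ({s(v, u)} : Finset _).card := by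
            apply Finset.card_le_card
            intro e he
            rw [Finset.mem_sdiff, Finset.mem_insert] at he
            rcases he.1 with rfl | h1
            · exact Finset.mem_singleton_self _
            · exact absurd h1 he.2
          _ ≤ 3 := by simp
    · have : (insert s(v, u) TE).filter (fun e => v ∈ e) = {s(v, u)} := by
        ext e
        rw [Finset.mem_filter, Finset.mem_insert, Finset.mem_singleton]
        constructor
        · rintro ⟨rfl | h1, hv⟩
          · rfl
          · exact absurd hv (hTEv _ h1)
        · rintro rfl; exact ⟨Or.inl rfl, Sym2.mem_mk_left _ _⟩
      rw [this, Finset.card_singleton]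
  · -- Case B : every edge at v has a colour of the tree
    push_neg at hA
    set F₀ := G.edgeFinset.filter (fun e => c e = c₀) with hF₀
    have hF₀G : ∀ f ∈ F₀, f ∈ G.edgeFinset := fun f hf => (Finset.mem_filter.mp hf).1
    have hF₀c : ∀ f ∈ F₀, c f = c₀ := fun f hf => (Finset.mem_filter.mp hf).2
    have hF₀v : ∀ f ∈ F₀, v ∉ f := by
      intro f hf hvf
      obtain ⟨z, rfl⟩ := Sym2.mem_iff_exists.mp hvf
      have hadj : G.Adj v z := SimpleGraph.mem_edgeFinset.mp (hF₀G _ hf)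
      have : c s(v, z) ∈ TE.image c := hA z (by rwa [SimpleGraph.mem_neighborFinset])
      rw [hF₀c _ hf] at this
      exact hc₀TE this
    have hF₀TE : ∀ f ∈ F₀, f ∉ TE := by
      intro f hf hfTE
      exact hc₀TE (hF₀c _ hf ▸ Finset.mem_image_of_mem c hfTE)
    obtain ⟨Fb, hFbsub, hFbcard⟩ := Finset.exists_subset_card_eq hc₀b
    by_cases hB1 : ∃ u ∈ N, ∃ e₁ ∈ TE, c e₁ = c s(v, u) ∧
        ∃ x₁ x₂ : Fin n, s(x₁, x₂) ∈ F₀ ∧ ¬ FR (TE.erase e₁) x₁ x₂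
    · -- two-edge swap
      obtain ⟨u, huN, e₁, he₁TE, hce₁, x₁, x₂, hfF₀, hncross⟩ := hB1
      obtain ⟨p, q, rfl⟩ := sym2_rep e₁
      have hadj : G.Adj v u := by rwa [SimpleGraph.mem_neighborFinset] at huN
      have hvu : v ≠ u := G.ne_of_adj hadj
      have huv : u ≠ v := hvu.symm
      have hpq : p ≠ q := fun hc => (hTEdiag _ he₁TE) (by rw [hc]; exact Sym2.mk_isDiag_iff.mpr rfl)
      have hpv : p ≠ v := fun hc => hTEv _ he₁TE (hc ▸ Sym2.mem_mk_left _ _)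
      have hqv : q ≠ v := fun hc => hTEv _ he₁TE (hc ▸ Sym2.mem_mk_right _ _)
      have hx₁₂ : x₁ ≠ x₂ := fun hc =>
        (SimpleGraph.not_isDiag_of_mem_edgeSet G
          (SimpleGraph.mem_edgeFinset.mp (hF₀G _ hfF₀))) (by rw [hc]; exact Sym2.mk_isDiag_iff.mpr rfl)
      have hx₁v : x₁ ≠ v := fun hc => hF₀v _ hfF₀ (hc ▸ Sym2.mem_mk_left _ _)
      have hx₂v : x₂ ≠ v := fun hc => hF₀v _ hfF₀ (hc ▸ Sym2.mem_mk_right _ _)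
      have hfTE : s(x₁, x₂) ∉ TE := hF₀TE _ hfF₀
      have hfne : s(x₁, x₂) ≠ s(p, q) := fun hc => hfTE (hc ▸ he₁TE)
      set E₂ := TE.erase s(p, q) with hE₂
      have hE₂v : ∀ e ∈ E₂, v ∉ e := fun e he => hTEv _ (Finset.mem_of_mem_erase he)
      have hTEins : TE = insert s(p, q) E₂ := (Finset.insert_erase he₁TE).symm
      have hF1 : ∀ t : Fin n, t ≠ v → FR E₂ t p ∨ FR E₂ t q := by
        intro t ht
        have h0 : FR TE t p := hTconn' t p ht hpv
        rw [hTEins] at h0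
        rcases lM h0 with h1 | ⟨h1, _⟩ | ⟨h1, _⟩
        · exact Or.inl h1
        · exact Or.inl h1
        · exact Or.inr h1
      set TE' := insert s(v, u) (insert s(x₁, x₂) E₂) with hTE'
      have hfmem' : s(x₁, x₂) ∈ TE' := Finset.mem_insert_of_mem (Finset.mem_insert_self _ _)
      have hE₂sub : E₂ ⊆ TE' := fun e he =>
        Finset.mem_insert_of_mem (Finset.mem_insert_of_mem he)
      have hRfpq : FR TE' p q := by
        have hfadj : FR TE' x₁ x₂ := (ladj hfmem' hx₁₂).reachable
        rcases hF1 x₁ hx₁v with h1 | h1 <;> rcases hF1 x₂ hx₂v with h2 | h2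
        · exact absurd (h1.trans h2.symm) hncross
        · exact ((lmono hE₂sub h1).symm.trans hfadj).trans (lmono hE₂sub h2)
        · exact ((lmono hE₂sub h2).symm.trans hfadj.symm).trans (lmono hE₂sub h1)
        · exact absurd (h1.trans h2.symm) hncross
      have hkey : ∀ t : Fin n, FR TE' t p := by
        intro t
        by_cases ht : t = v
        · rw [ht]
          have h1 : FR TE' v u := (ladj (Finset.mem_insert_self _ _) hvu).reachable
          rcases hF1 u huv with h2 | h2
          · exact h1.trans (lmono hE₂sub h2)
          · exact (h1.trans (lmono hE₂sub h2)).trans hRfpq.symm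
        · rcases hF1 t ht with h2 | h2
          · exact lmono hE₂sub h2
          · exact (lmono hE₂sub h2).trans hRfpq.symm
      refine ⟨TE', ?_, ?_, ?_, ?_, ?_, ?_, ?_⟩
      · intro e he
        rcases Finset.mem_insert.mp he with rfl | he
        · exact Or.inr (Or.inr (Or.inr ⟨SimpleGraph.mem_edgeFinset.mpr hadj,
            Sym2.mem_mk_left _ _⟩))
        rcases Finset.mem_insert.mp he with rfl | he
        · exact Or.inr (Or.inr (Or.inl ⟨hF₀G _ hfF₀, hF₀c _ hfF₀⟩))
        · exact Or.inl (Finset.mem_of_mem_erase he)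
      · intro e _ x _; rw [hinsTV]; exact Finset.mem_univ x
      · intro x _ y _; exact (hkey x).trans (hkey y).symm
      · apply lacyclic_of_bridges
        intro x y hmem hne hreach
        rcases Finset.mem_insert.mp hmem with heq | hmem
        · -- the edge at v
          have hsub : TE'.erase s(x, y) ⊆ insert s(x₁, x₂) E₂ := by
            intro e he
            rcases Finset.mem_insert.mp (Finset.mem_of_mem_erase he) with h1 | h1
            · exact absurd (h1.trans heq.symm) (Finset.ne_of_mem_erase he)
            · exact h1
          have hiso : ∀ e ∈ insert s(x₁, x₂) E₂, v ∉ e := by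
            intro e he
            rcases Finset.mem_insert.mp he with rfl | he
            · exact hF₀v _ hfF₀
            · exact hE₂v _ he
          have hreach2 := lmono hsub hreach
          rw [Sym2.eq_iff] at heq
          rcases heq with ⟨rfl, rfl⟩ | ⟨rfl, rfl⟩
          · exact hne (lisolated hiso hreach2)
          · exact hne (lisolated hiso hreach2.symm).symm
        rcases Finset.mem_insert.mp hmem with heq | hmem
        · -- the colour-c₀ edge
          have hxv : x ≠ v := fun hc => hF₀v _ hfF₀ (heq ▸ hc ▸ Sym2.mem_mk_left _ _)
          have hyv : y ≠ v := fun hc => hF₀v _ hfF₀ (heq ▸ hc ▸ Sym2.mem_mk_right _ _)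
          have hsub : TE'.erase s(x, y) ⊆ insert s(v, u) E₂ := by
            intro e he
            rcases Finset.mem_insert.mp (Finset.mem_of_mem_erase he) with h1 | h1
            · exact h1 ▸ Finset.mem_insert_self _ _
            rcases Finset.mem_insert.mp h1 with h2 | h2
            · exact absurd (h2.trans heq.symm) (Finset.ne_of_mem_erase he)
            · exact Finset.mem_insert_of_mem h2
          have hreach2 := ldropleaf hE₂v hxv hyv (lmono hsub hreach)
          rw [Sym2.eq_iff] at heq
          rcases heq with ⟨rfl, rfl⟩ | ⟨rfl, rfl⟩
          · exact hncross hreach2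
          · exact hncross hreach2.symm
        · -- a tree edge
          have hmemTE : s(x, y) ∈ TE := Finset.mem_of_mem_erase hmem
          have hxv : x ≠ v := fun hc => hTEv _ hmemTE (hc ▸ Sym2.mem_mk_left _ _)
          have hyv : y ≠ v := fun hc => hTEv _ hmemTE (hc ▸ Sym2.mem_mk_right _ _)
          have hsub : TE'.erase s(x, y) ⊆
              insert s(v, u) (insert s(x₁, x₂) (E₂.erase s(x, y))) := by
            intro e he
            have hne' := Finset.ne_of_mem_erase he
            rcases Finset.mem_insert.mp (Finset.mem_of_mem_erase he) with h1 | h1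
            · exact h1 ▸ Finset.mem_insert_self _ _
            rcases Finset.mem_insert.mp h1 with h2 | h2
            · exact h2 ▸ Finset.mem_insert_of_mem (Finset.mem_insert_self _ _)
            · exact Finset.mem_insert_of_mem (Finset.mem_insert_of_mem
                (Finset.mem_erase.mpr ⟨hne', h2⟩))
          have hiso : ∀ e ∈ insert s(x₁, x₂) (E₂.erase s(x, y)), v ∉ e := by
            intro e he
            rcases Finset.mem_insert.mp he with rfl | he
            · exact hF₀v _ hfF₀
            · exact hE₂v _ (Finset.mem_of_mem_erase he)
          have hreach2 := ldropleaf hiso hxv hyv (lmono hsub hreach)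
          have hQR : ∀ a b : Fin n, FR (E₂.erase s(x, y)) a b → FR E₂ a b :=
            fun a b h => lmono (Finset.erase_subset _ _) h
          rcases lM hreach2 with h1 | ⟨h1, h2⟩ | ⟨h1, h2⟩
          · have : FR (TE.erase s(x, y)) x y := by
              apply lmono _ h1
              exact Finset.erase_subset_erase _ (Finset.erase_subset _ _)
            exact lcut hTacyc hmemTE hne this
          · have hadjxy : FR E₂ x y := (ladj hmem hne).reachable
            exact hncross (((hQR _ _ h1).symm.trans hadjxy).trans (hQR _ _ h2).symm)
          · have hadjxy : FR E₂ x y := (ladj hmem hne).reachable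
            exact hncross (((hQR _ _ h2).trans hadjxy.symm).trans (hQR _ _ h1))
      · -- rainbow
        intro a ha b hb' hab
        have hmem : ∀ g, g ∈ (↑TE' : Set (Sym2 (Fin n))) →
            g = s(v, u) ∨ g = s(x₁, x₂) ∨ g ∈ E₂ := by
          intro g hg
          have : g ∈ TE' := by exact_mod_cast hg
          rcases Finset.mem_insert.mp this with h1 | h1
          · exact Or.inl h1
          rcases Finset.mem_insert.mp h1 with h2 | h2
          · exact Or.inr (Or.inl h2)
          · exact Or.inr (Or.inr h2)
        have hcvu : c s(v, u) = c s(p, q) := hce₁.symm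
        have hcnotin : ∀ g ∈ E₂, c g ≠ c s(p, q) := by
          intro g hg hc
          exact Finset.ne_of_mem_erase hg (hTinj (by exact_mod_cast Finset.mem_of_mem_erase hg)
            (by exact_mod_cast he₁TE) hc)
        have hcf : c s(x₁, x₂) = c₀ := hF₀c _ hfF₀
        have hc₀notin : ∀ g ∈ TE, c g ≠ c₀ := fun g hg hc =>
          hc₀TE (hc ▸ Finset.mem_image_of_mem c hg)
        rcases hmem a ha with rfl | rfl | haE <;> rcases hmem b hb' with rfl | rfl | hbE
        · rfl
        · exact absurd (hcvu.symm.trans hab |>.trans hcf)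
            (hc₀notin _ he₁TE)
        · exact absurd (hab.symm.trans hcvu) (fun hc => hcnotin _ hbE hc)
        · exact absurd (hcf.symm.trans hab |>.trans hcvu).symm (hc₀notin _ he₁TE)
        · rfl
        · exact absurd (hab.symm.trans hcf)
            (hc₀notin _ (Finset.mem_of_mem_erase hbE))
        · exact absurd (hab.trans hcvu) (fun hc => hcnotin _ haE hc)
        · exact absurd (hab.trans hcf) (hc₀notin _ (Finset.mem_of_mem_erase haE))
        · exact hTinj (by exact_mod_cast Finset.mem_of_mem_erase haE)
            (by exact_mod_cast Finset.mem_of_mem_erase hbE) hab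
      · calc (TE' \ TE).card ≤ ({s(v, u), s(x₁, x₂)} : Finset _).card := by
              apply Finset.card_le_card
              intro e he
              rw [Finset.mem_sdiff] at he
              rcases Finset.mem_insert.mp he.1 with rfl | h1
              · exact Finset.mem_insert_self _ _
              rcases Finset.mem_insert.mp h1 with rfl | h1
              · exact Finset.mem_insert_of_mem (Finset.mem_singleton_self _)
              · exact absurd (Finset.mem_of_mem_erase h1) he.2
            _ ≤ 3 := (Finset.card_insert_le _ _).trans (by simp)
      · have : TE'.filter (fun e => v ∈ e) = {s(v, u)} := by
          ext e
          rw [Finset.mem_filter, Finset.mem_singleton]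
          constructor
          · rintro ⟨hmem, hv⟩
            rcases Finset.mem_insert.mp hmem with rfl | h1
            · rfl
            rcases Finset.mem_insert.mp h1 with rfl | h1
            · exact absurd hv (hF₀v _ hfF₀)
            · exact absurd hv (hE₂v _ h1)
          · rintro rfl; exact ⟨Finset.mem_insert_self _ _, Sym2.mem_mk_left _ _⟩
        rw [this, Finset.card_singleton]
    · -- Case B2 : three-edge swap needed
      push_neg at hB1
      have hFbG : ∀ f ∈ Fb, f ∈ G.edgeFinset := fun f hf => hF₀G _ (hFbsub hf)
      set P := TE.filter
        (fun g => ∃ x₁ x₂ : Fin n, s(x₁, x₂) ∈ Fb ∧ ¬ FR (TE.erase g) x₁ x₂) with hP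
      have hV₀P : ∀ f ∈ Fb, ∀ t, t ∈ f → ∃ g ∈ P, t ∈ g := by
        intro f hf t htf
        obtain ⟨z, rfl⟩ := Sym2.mem_iff_exists.mp htf
        have htz : t ≠ z := fun hc =>
          (SimpleGraph.not_isDiag_of_mem_edgeSet G
            (SimpleGraph.mem_edgeFinset.mp (hFbG _ hf))) (by rw [hc]; exact Sym2.mk_isDiag_iff.mpr rfl)
        have htv : t ≠ v := fun hc => hF₀v _ (hFbsub hf) (hc ▸ Sym2.mem_mk_left _ _)
        have hzv : z ≠ v := fun hc => hF₀v _ (hFbsub hf) (hc ▸ Sym2.mem_mk_right _ _)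
        obtain ⟨g, hgTE, htg, hgcut⟩ := lfirstEdge hTacyc (hTconn' t z htv hzv) htz
        exact ⟨g, Finset.mem_filter.mpr ⟨hgTE, t, z, hf, hgcut⟩, htg⟩
      have hPcard : b ≤ P.card := by
        have h1 : Fb.biUnion eset ⊆ P.biUnion eset := by
          intro t ht
          obtain ⟨f, hf, htf⟩ := Finset.mem_biUnion.mp ht
          obtain ⟨g, hg, htg⟩ := hV₀P f hf t (mem_eset.mp htf)
          exact Finset.mem_biUnion.mpr ⟨g, hg, mem_eset.mpr htg⟩
        have h2 : (Fb.biUnion eset).card = 2 * b := by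
          rw [Finset.card_biUnion]
          · rw [Finset.sum_congr rfl (fun f hf => eset_card_eq
              (SimpleGraph.not_isDiag_of_mem_edgeSet G
                (SimpleGraph.mem_edgeFinset.mp (hFbG _ hf))))]
            rw [Finset.sum_const, hFbcard, smul_eq_mul, mul_comm]
          · intro f hf f' hf' hne
            rw [Function.onFun, Finset.disjoint_left]
            intro t htf htf'
            exact hne (hprop f (hFbG _ hf) f' (hFbG _ hf')
              ((hF₀c _ (hFbsub hf)).trans (hF₀c _ (hFbsub hf')).symm)
              ⟨t, mem_eset.mp htf, mem_eset.mp htf'⟩)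
        have h3 := Finset.card_le_card h1
        have h4 := card_biUnion_eset_le P
        omega
      obtain ⟨Pb, hPbsub, hPbcard⟩ := Finset.exists_subset_card_eq hPcard
      have hPbTE : Pb ⊆ TE := hPbsub.trans (Finset.filter_subset _ _)
      set S := Pb.image c with hS
      have hScard : S.card = b := by
        rw [Finset.card_image_of_injOn (hTinj.mono (by exact_mod_cast hPbTE)), hPbcard]
      have hSsub : S ⊆ TE.image c := Finset.image_subset_image hPbTE
      have hWcard := hcover S hSsub hScard
      by_cases hC : ∃ hh ∈ HE, ∃ w z : Fin n, hh = s(w, z) ∧ c hh ∈ S ∧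
          ∃ u' ∈ N, ∃ e₁ ∈ TE, c e₁ = c s(v, u') ∧ ¬ FR (TE.erase e₁) w z
      · -- the three-edge swap exists
        obtain ⟨hh, hhHE, w, z, rfl, hcS, u', hu'N, e₁, he₁TE, hce₁, hncrossH⟩ := hC
        obtain ⟨e₂, he₂Pb, hce₂⟩ := Finset.mem_image.mp hcS
        have he₂P := hPbsub he₂Pb
        obtain ⟨x₁, x₂, hfFb, hncross2⟩ := (Finset.mem_filter.mp he₂P).2
        have he₂TE : e₂ ∈ TE := (Finset.mem_filter.mp he₂P).1
        have hfF₀ : s(x₁, x₂) ∈ F₀ := hFbsub hfFb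
        have hcross1 : FR (TE.erase e₁) x₁ x₂ := hB1 u' hu'N e₁ he₁TE hce₁ x₁ x₂ hfF₀
        have hne12 : e₁ ≠ e₂ := fun hc => hncross2 (hc ▸ hcross1)
        obtain ⟨p, q, rfl⟩ := sym2_rep e₁
        obtain ⟨p', q', rfl⟩ := sym2_rep e₂
        have hadj : G.Adj v u' := by rwa [SimpleGraph.mem_neighborFinset] at hu'N
        have hvu : v ≠ u' := G.ne_of_adj hadj
        have huv : u' ≠ v := hvu.symm
        have hpq : p ≠ q := fun hc => (hTEdiag _ he₁TE) (by rw [hc]; exact Sym2.mk_isDiag_iff.mpr rfl)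
        have hpv : p ≠ v := fun hc => hTEv _ he₁TE (hc ▸ Sym2.mem_mk_left _ _)
        have hqv : q ≠ v := fun hc => hTEv _ he₁TE (hc ▸ Sym2.mem_mk_right _ _)
        have hhG : s(w, z) ∈ G.edgeFinset := hHEG _ hhHE
        have hwz : w ≠ z := fun hc =>
          (SimpleGraph.not_isDiag_of_mem_edgeSet G (SimpleGraph.mem_edgeFinset.mp hhG))
            (by rw [hc]; exact Sym2.mk_isDiag_iff.mpr rfl)
        have hwv : w ≠ v := fun hc => hHEv _ hhHE (hc ▸ Sym2.mem_mk_left _ _)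
        have hzv : z ≠ v := fun hc => hHEv _ hhHE (hc ▸ Sym2.mem_mk_right _ _)
        have hx₁₂ : x₁ ≠ x₂ := fun hc =>
          (SimpleGraph.not_isDiag_of_mem_edgeSet G
            (SimpleGraph.mem_edgeFinset.mp (hF₀G _ hfF₀)))
            (by rw [hc]; exact Sym2.mk_isDiag_iff.mpr rfl)
        have hx₁v : x₁ ≠ v := fun hc => hF₀v _ hfF₀ (hc ▸ Sym2.mem_mk_left _ _)
        have hx₂v : x₂ ≠ v := fun hc => hF₀v _ hfF₀ (hc ▸ Sym2.mem_mk_right _ _)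
        have hfTE : s(x₁, x₂) ∉ TE := hF₀TE _ hfF₀
        have hhTE : s(w, z) ∉ TE := Finset.disjoint_left.mp hdisj hhHE
        set E₃ := (TE.erase s(p, q)).erase s(p', q') with hE₃
        have hE₃v : ∀ e ∈ E₃, v ∉ e := fun e he =>
          hTEv _ (Finset.mem_of_mem_erase (Finset.mem_of_mem_erase he))
        have hE₃TE : E₃ ⊆ TE := fun e he =>
          Finset.mem_of_mem_erase (Finset.mem_of_mem_erase he)
        have hE₃sub1 : E₃ ⊆ TE.erase s(p, q) := Finset.erase_subset _ _
        have hE₃sub2 : E₃ ⊆ TE.erase s(p', q') := by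
          intro e he
          obtain ⟨hne2, he'⟩ := Finset.mem_erase.mp he
          exact Finset.mem_erase.mpr ⟨hne2, Finset.mem_of_mem_erase he'⟩
        have hE₂ins : TE.erase s(p, q) = insert s(p', q') E₃ :=
          (Finset.insert_erase (Finset.mem_erase.mpr ⟨hne12.symm, he₂TE⟩)).symm
        have hTEins : TE = insert s(p, q) (TE.erase s(p, q)) :=
          (Finset.insert_erase he₁TE).symm
        set TE' := insert s(v, u') (insert s(w, z) (insert s(x₁, x₂) E₃)) with hTE'
        have hhmem : s(w, z) ∈ TE' := Finset.mem_insert_of_mem (Finset.mem_insert_self _ _)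
        have hfmem : s(x₁, x₂) ∈ TE' :=
          Finset.mem_insert_of_mem (Finset.mem_insert_of_mem (Finset.mem_insert_self _ _))
        have hE₃sub : E₃ ⊆ TE' := fun e he =>
          Finset.mem_insert_of_mem (Finset.mem_insert_of_mem (Finset.mem_insert_of_mem he))
        have hfadj : FR TE' x₁ x₂ := (ladj hfmem hx₁₂).reachable
        have hhadj : FR TE' w z := (ladj hhmem hwz).reachable
        have hRfp'q' : FR TE' p' q' := by
          have h0 := hcross1
          rw [hE₂ins] at h0
          rcases lM h0 with h1 | ⟨h1, h2⟩ | ⟨h1, h2⟩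
          · exact absurd (lmono hE₃sub2 h1) hncross2
          · exact ((lmono hE₃sub h1).symm.trans hfadj).trans (lmono hE₃sub h2).symm
          · exact ((lmono hE₃sub h2).trans hfadj.symm).trans (lmono hE₃sub h1)
        have hR1Rf : ∀ a b : Fin n, FR (TE.erase s(p, q)) a b → FR TE' a b := by
          intro a b h
          rw [hE₂ins] at h
          rcases lM h with h1 | ⟨h1, h2⟩ | ⟨h1, h2⟩
          · exact lmono hE₃sub h1
          · exact ((lmono hE₃sub h1).trans hRfp'q').trans (lmono hE₃sub h2)
          · exact ((lmono hE₃sub h1).trans hRfp'q'.symm).trans (lmono hE₃sub h2)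
        have hF1 : ∀ t : Fin n, t ≠ v →
            FR (TE.erase s(p, q)) t p ∨ FR (TE.erase s(p, q)) t q := by
          intro t ht
          have h0 : FR TE t p := hTconn' t p ht hpv
          rw [hTEins] at h0
          rcases lM h0 with h1 | ⟨h1, _⟩ | ⟨h1, _⟩
          · exact Or.inl h1
          · exact Or.inl h1
          · exact Or.inr h1
        have hRfpq : FR TE' p q := by
          rcases hF1 w hwv with h1 | h1 <;> rcases hF1 z hzv with h2 | h2
          · exact absurd (h1.trans h2.symm) hncrossH
          · exact ((hR1Rf _ _ h1).symm.trans hhadj).trans (hR1Rf _ _ h2)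
          · exact ((hR1Rf _ _ h2).symm.trans hhadj.symm).trans (hR1Rf _ _ h1)
          · exact absurd (h1.trans h2.symm) hncrossH
        have hkey : ∀ t : Fin n, FR TE' t p := by
          intro t
          by_cases ht : t = v
          · rw [ht]
            have h1 : FR TE' v u' := (ladj (Finset.mem_insert_self _ _) hvu).reachable
            rcases hF1 u' huv with h2 | h2
            · exact h1.trans (hR1Rf _ _ h2)
            · exact (h1.trans (hR1Rf _ _ h2)).trans hRfpq.symm
          · rcases hF1 t ht with h2 | h2
            · exact hR1Rf _ _ h2
            · exact (hR1Rf _ _ h2).trans hRfpq.symm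
        refine ⟨TE', ?_, ?_, ?_, ?_, ?_, ?_, ?_⟩
        · intro e he
          rcases Finset.mem_insert.mp he with rfl | he
          · exact Or.inr (Or.inr (Or.inr ⟨SimpleGraph.mem_edgeFinset.mpr hadj,
              Sym2.mem_mk_left _ _⟩))
          rcases Finset.mem_insert.mp he with rfl | he
          · exact Or.inr (Or.inl hhHE)
          rcases Finset.mem_insert.mp he with rfl | he
          · exact Or.inr (Or.inr (Or.inl ⟨hF₀G _ hfF₀, hF₀c _ hfF₀⟩))
          · exact Or.inl (hE₃TE he)
        · intro e _ x _; rw [hinsTV]; exact Finset.mem_univ x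
        · intro x _ y _; exact (hkey x).trans (hkey y).symm
        · -- acyclicity
          apply lacyclic_of_bridges
          intro x y hmem hne hreach
          rcases Finset.mem_insert.mp hmem with heq | hmem
          · -- the edge at v
            have hsub : TE'.erase s(x, y) ⊆ insert s(w, z) (insert s(x₁, x₂) E₃) := by
              intro e he
              rcases Finset.mem_insert.mp (Finset.mem_of_mem_erase he) with h1 | h1
              · exact absurd (h1.trans heq.symm) (Finset.ne_of_mem_erase he)
              · exact h1
            have hiso : ∀ e ∈ insert s(w, z) (insert s(x₁, x₂) E₃), v ∉ e := by
              intro e he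
              rcases Finset.mem_insert.mp he with rfl | he
              · exact hHEv _ hhHE
              rcases Finset.mem_insert.mp he with rfl | he
              · exact hF₀v _ hfF₀
              · exact hE₃v _ he
            have hreach2 := lmono hsub hreach
            rw [Sym2.eq_iff] at heq
            rcases heq with ⟨rfl, rfl⟩ | ⟨rfl, rfl⟩
            · exact hne (lisolated hiso hreach2)
            · exact hne (lisolated hiso hreach2.symm).symm
          rcases Finset.mem_insert.mp hmem with heq | hmem
          · -- the H edge
            have hxv : x ≠ v := fun hc => hHEv _ hhHE (heq ▸ hc ▸ Sym2.mem_mk_left _ _)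
            have hyv : y ≠ v := fun hc => hHEv _ hhHE (heq ▸ hc ▸ Sym2.mem_mk_right _ _)
            have hsub : TE'.erase s(x, y) ⊆ insert s(v, u') (insert s(x₁, x₂) E₃) := by
              intro e he
              rcases Finset.mem_insert.mp (Finset.mem_of_mem_erase he) with h1 | h1
              · exact h1 ▸ Finset.mem_insert_self _ _
              rcases Finset.mem_insert.mp h1 with h2 | h2
              · exact absurd (h2.trans heq.symm) (Finset.ne_of_mem_erase he)
              · exact Finset.mem_insert_of_mem h2
            have hiso : ∀ e ∈ insert s(x₁, x₂) E₃, v ∉ e := by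
              intro e he
              rcases Finset.mem_insert.mp he with rfl | he
              · exact hF₀v _ hfF₀
              · exact hE₃v _ he
            have hreach2 := ldropleaf hiso hxv hyv (lmono hsub hreach)
            have hR1xy : FR (TE.erase s(p, q)) x y := by
              rcases lM hreach2 with h1 | ⟨h1, h2⟩ | ⟨h1, h2⟩
              · exact lmono hE₃sub1 h1
              · exact ((lmono hE₃sub1 h1).trans hcross1).trans (lmono hE₃sub1 h2)
              · exact ((lmono hE₃sub1 h1).trans hcross1.symm).trans (lmono hE₃sub1 h2)
            rw [Sym2.eq_iff] at heq
            rcases heq with ⟨rfl, rfl⟩ | ⟨rfl, rfl⟩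
            · exact hncrossH hR1xy
            · exact hncrossH hR1xy.symm
          rcases Finset.mem_insert.mp hmem with heq | hmem
          · -- the colour-c₀ edge
            have hxv : x ≠ v := fun hc => hF₀v _ hfF₀ (heq ▸ hc ▸ Sym2.mem_mk_left _ _)
            have hyv : y ≠ v := fun hc => hF₀v _ hfF₀ (heq ▸ hc ▸ Sym2.mem_mk_right _ _)
            have hsub : TE'.erase s(x, y) ⊆ insert s(v, u') (insert s(w, z) E₃) := by
              intro e he
              rcases Finset.mem_insert.mp (Finset.mem_of_mem_erase he) with h1 | h1
              · exact h1 ▸ Finset.mem_insert_self _ _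
              rcases Finset.mem_insert.mp h1 with h2 | h2
              · exact h2 ▸ Finset.mem_insert_of_mem (Finset.mem_insert_self _ _)
              rcases Finset.mem_insert.mp h2 with h3 | h3
              · exact absurd (h3.trans heq.symm) (Finset.ne_of_mem_erase he)
              · exact Finset.mem_insert_of_mem (Finset.mem_insert_of_mem h3)
            have hiso : ∀ e ∈ insert s(w, z) E₃, v ∉ e := by
              intro e he
              rcases Finset.mem_insert.mp he with rfl | he
              · exact hHEv _ hhHE
              · exact hE₃v _ he
            have hreach2 := ldropleaf hiso hxv hyv (lmono hsub hreach)
            have hR1wz : FR (TE.erase s(p, q)) w z → False := hncrossH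
            have key : FR (TE.erase s(p', q')) x y ∨ FR (TE.erase s(p, q)) w z := by
              rcases lM hreach2 with h1 | ⟨h1, h2⟩ | ⟨h1, h2⟩
              · exact Or.inl (lmono hE₃sub2 h1)
              · -- h1 : R₃ x w, h2 : R₃ z y
                refine Or.inr ?_
                rw [Sym2.eq_iff] at heq
                rcases heq with ⟨rfl, rfl⟩ | ⟨rfl, rfl⟩
                · exact ((lmono hE₃sub1 h1).symm.trans hcross1).trans (lmono hE₃sub1 h2).symm
                · exact ((lmono hE₃sub1 h1).symm.trans hcross1.symm).trans
                    (lmono hE₃sub1 h2).symm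
              · -- h1 : R₃ x z, h2 : R₃ w y
                refine Or.inr ?_
                rw [Sym2.eq_iff] at heq
                rcases heq with ⟨rfl, rfl⟩ | ⟨rfl, rfl⟩
                · exact ((lmono hE₃sub1 h2).trans hcross1.symm).trans (lmono hE₃sub1 h1)
                · exact ((lmono hE₃sub1 h2).trans hcross1).trans (lmono hE₃sub1 h1)
            rcases key with hkey2 | hkey2
            · rw [Sym2.eq_iff] at heq
              rcases heq with ⟨rfl, rfl⟩ | ⟨rfl, rfl⟩
              · exact hncross2 hkey2
              · exact hncross2 hkey2.symm
            · exact hncrossH hkey2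
          · -- a tree edge of E₃
            have hmemTE : s(x, y) ∈ TE := hE₃TE hmem
            have hxv : x ≠ v := fun hc => hTEv _ hmemTE (hc ▸ Sym2.mem_mk_left _ _)
            have hyv : y ≠ v := fun hc => hTEv _ hmemTE (hc ▸ Sym2.mem_mk_right _ _)
            have hsub : TE'.erase s(x, y) ⊆
                insert s(v, u') (insert s(w, z) (insert s(x₁, x₂) (E₃.erase s(x, y)))) := by
              intro e he
              have hne' := Finset.ne_of_mem_erase he
              rcases Finset.mem_insert.mp (Finset.mem_of_mem_erase he) with h1 | h1
              · exact h1 ▸ Finset.mem_insert_self _ _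
              rcases Finset.mem_insert.mp h1 with h2 | h2
              · exact h2 ▸ Finset.mem_insert_of_mem (Finset.mem_insert_self _ _)
              rcases Finset.mem_insert.mp h2 with h3 | h3
              · exact h3 ▸ Finset.mem_insert_of_mem
                  (Finset.mem_insert_of_mem (Finset.mem_insert_self _ _))
              · exact Finset.mem_insert_of_mem (Finset.mem_insert_of_mem
                  (Finset.mem_insert_of_mem (Finset.mem_erase.mpr ⟨hne', h3⟩)))
            have hiso : ∀ e ∈ insert s(w, z) (insert s(x₁, x₂) (E₃.erase s(x, y))), v ∉ e := by
              intro e he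
              rcases Finset.mem_insert.mp he with rfl | he
              · exact hHEv _ hhHE
              rcases Finset.mem_insert.mp he with rfl | he
              · exact hF₀v _ hfF₀
              · exact hE₃v _ (Finset.mem_of_mem_erase he)
            have hreach2 := ldropleaf hiso hxv hyv (lmono hsub hreach)
            have hUxy : FR (insert s(x₁, x₂) E₃) x y :=
              (ladj (Finset.mem_insert_of_mem hmem) hne).reachable
            have hRofU : ∀ a b : Fin n, FR (insert s(x₁, x₂) (E₃.erase s(x, y))) a b →
                FR (insert s(x₁, x₂) E₃) a b :=
              fun a b h => lmono (Finset.insert_subset_insert _ (Finset.erase_subset _ _)) h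
            have hUcontra : ¬ FR (insert s(x₁, x₂) E₃) w z := by
              intro hU
              rcases lM hU with h1 | ⟨h1, h2⟩ | ⟨h1, h2⟩
              · exact hncrossH (lmono hE₃sub1 h1)
              · exact hncrossH (((lmono hE₃sub1 h1).trans hcross1).trans (lmono hE₃sub1 h2))
              · exact hncrossH (((lmono hE₃sub1 h1).trans hcross1.symm).trans
                  (lmono hE₃sub1 h2))
            have hadjE₃ : FR E₃ x y := (ladj hmem hne).reachable
            rcases lM hreach2 with h1 | ⟨h1, h2⟩ | ⟨h1, h2⟩
            · rcases lM h1 with g1 | ⟨g1, g2⟩ | ⟨g1, g2⟩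
              · refine lcut hTacyc hmemTE hne (lmono ?_ g1)
                intro e he
                obtain ⟨hne2, he'⟩ := Finset.mem_erase.mp he
                exact Finset.mem_erase.mpr ⟨hne2, hE₃TE he'⟩
              · -- g1 : R₄ x x₁, g2 : R₄ x₂ y
                have hR3 : FR E₃ x₁ x₂ :=
                  ((lmono (Finset.erase_subset _ _) g1).symm.trans hadjE₃).trans
                    (lmono (Finset.erase_subset _ _) g2).symm
                exact hncross2 (lmono hE₃sub2 hR3)
              · -- g1 : R₄ x x₂, g2 : R₄ x₁ y
                have hR3 : FR E₃ x₁ x₂ :=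
                  ((lmono (Finset.erase_subset _ _) g2).trans hadjE₃.symm).trans
                    (lmono (Finset.erase_subset _ _) g1)
                exact hncross2 (lmono hE₃sub2 hR3)
            · exact hUcontra (((hRofU _ _ h1).symm.trans hUxy).trans (hRofU _ _ h2).symm)
            · exact hUcontra (((hRofU _ _ h2).trans hUxy.symm).trans (hRofU _ _ h1))
        · -- rainbow
          intro a ha b' hb' hab
          have hmemcl : ∀ g, g ∈ (↑TE' : Set (Sym2 (Fin n))) →
              g = s(v, u') ∨ g = s(w, z) ∨ g = s(x₁, x₂) ∨ g ∈ E₃ := by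
            intro g hg
            have : g ∈ TE' := by exact_mod_cast hg
            rcases Finset.mem_insert.mp this with h1 | h1
            · exact Or.inl h1
            rcases Finset.mem_insert.mp h1 with h2 | h2
            · exact Or.inr (Or.inl h2)
            rcases Finset.mem_insert.mp h2 with h3 | h3
            · exact Or.inr (Or.inr (Or.inl h3))
            · exact Or.inr (Or.inr (Or.inr h3))
          have hcvu : c s(v, u') = c s(p, q) := hce₁.symm
          have hch : c s(w, z) = c s(p', q') := hce₂.symm
          have hcf : c s(x₁, x₂) = c₀ := hF₀c _ hfF₀
          have hc₀notin : ∀ g ∈ TE, c g ≠ c₀ := fun g hg hc =>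
            hc₀TE (hc ▸ Finset.mem_image_of_mem c hg)
          have hc12 : c s(p, q) ≠ c s(p', q') := fun hc =>
            hne12 (hTinj (by exact_mod_cast he₁TE) (by exact_mod_cast he₂TE) hc)
          have hcnotin1 : ∀ g ∈ E₃, c g ≠ c s(p, q) := by
            intro g hg hc
            exact Finset.ne_of_mem_erase (hE₃sub1 hg)
              (hTinj (by exact_mod_cast hE₃TE hg) (by exact_mod_cast he₁TE) hc)
          have hcnotin2 : ∀ g ∈ E₃, c g ≠ c s(p', q') := by
            intro g hg hc
            exact Finset.ne_of_mem_erase hg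
              (hTinj (by exact_mod_cast hE₃TE hg) (by exact_mod_cast he₂TE) hc)
          rcases hmemcl a ha with rfl | rfl | rfl | haE <;>
            rcases hmemcl b' hb' with rfl | rfl | rfl | hbE
          · rfl
          · exact absurd ((hcvu.symm.trans hab).trans hch) hc12
          · exact absurd ((hcvu.symm.trans hab).trans hcf) (hc₀notin _ he₁TE)
          · exact absurd (hab.symm.trans hcvu) (hcnotin1 _ hbE)
          · exact absurd ((hcvu.symm.trans hab.symm).trans hch) hc12
          · rfl
          · exact absurd ((hch.symm.trans hab).trans hcf) (hc₀notin _ he₂TE)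
          · exact absurd (hab.symm.trans hch) (hcnotin2 _ hbE)
          · exact absurd ((hcf.symm.trans hab).trans hcvu).symm (hc₀notin _ he₁TE)
          · exact absurd ((hcf.symm.trans hab).trans hch).symm (hc₀notin _ he₂TE)
          · rfl
          · exact absurd (hab.symm.trans hcf) (hc₀notin _ (hE₃TE hbE))
          · exact absurd (hab.trans hcvu) (hcnotin1 _ haE)
          · exact absurd (hab.trans hch) (hcnotin2 _ haE)
          · exact absurd (hab.trans hcf) (hc₀notin _ (hE₃TE haE))
          · exact hTinj (by exact_mod_cast hE₃TE haE) (by exact_mod_cast hE₃TE hbE) hab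
        · calc (TE' \ TE).card ≤ ({s(v, u'), s(w, z), s(x₁, x₂)} : Finset _).card := by
                apply Finset.card_le_card
                intro e he
                rw [Finset.mem_sdiff] at he
                rcases Finset.mem_insert.mp he.1 with rfl | h1
                · exact Finset.mem_insert_self _ _
                rcases Finset.mem_insert.mp h1 with rfl | h1
                · exact Finset.mem_insert_of_mem (Finset.mem_insert_self _ _)
                rcases Finset.mem_insert.mp h1 with rfl | h1
                · exact Finset.mem_insert_of_mem
                    (Finset.mem_insert_of_mem (Finset.mem_singleton_self _))
                · exact absurd (hE₃TE h1) he.2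
              _ ≤ 3 := (Finset.card_insert_le _ _).trans
                (Nat.succ_le_succ ((Finset.card_insert_le _ _).trans (by simp)))
        · have : TE'.filter (fun e => v ∈ e) = {s(v, u')} := by
            ext e
            rw [Finset.mem_filter, Finset.mem_singleton]
            constructor
            · rintro ⟨hmem, hv⟩
              rcases Finset.mem_insert.mp hmem with rfl | h1
              · rfl
              rcases Finset.mem_insert.mp h1 with rfl | h1
              · exact absurd hv (hHEv _ hhHE)
              rcases Finset.mem_insert.mp h1 with rfl | h1
              · exact absurd hv (hF₀v _ hfF₀)
              · exact absurd hv (hE₃v _ h1)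
            · rintro rfl; exact ⟨Finset.mem_insert_self _ _, Sym2.mem_mk_left _ _⟩
          rw [this, Finset.card_singleton]
      · -- no crossing pair : contradiction by counting
        exfalso
        push_neg at hC
        set TEgood := TE.filter (fun g => ∃ u ∈ N, c g = c s(v, u)) with hTEgood
        have hgoodsub : TEgood ⊆ TE := Finset.filter_subset _ _
        have hgoodcard : N.card ≤ TEgood.card := by
          have hex : ∀ u ∈ N, ∃ e ∈ TE, c e = c s(v, u) := by
            intro u hu
            obtain ⟨e, he, hce⟩ := Finset.mem_image.mp (hA u hu)
            exact ⟨e, he, hce⟩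
          haveI : Inhabited (Sym2 (Fin n)) := ⟨s(v, v)⟩
          choose! f hf1 hf2 using hex
          apply Finset.card_le_card_of_injOn f
          · intro u hu
            exact Finset.mem_filter.mpr ⟨hf1 u hu, u, hu, hf2 u hu⟩
          · intro u hu u' hu' heq
            by_contra hneu
            have huN : u ∈ N := by exact_mod_cast hu
            have huN' : u' ∈ N := by exact_mod_cast hu'
            have hadjvu : G.Adj v u := by rwa [SimpleGraph.mem_neighborFinset] at huN
            have hadjvu' : G.Adj v u' := by rwa [SimpleGraph.mem_neighborFinset] at huN'
            have hne2 : s(v, u) ≠ s(v, u') := by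
              intro hcon
              rw [Sym2.eq_iff] at hcon
              rcases hcon with ⟨_, h2⟩ | ⟨h1, h2⟩
              · exact hneu h2
              · exact (G.ne_of_adj hadjvu) h2.symm
            have hcne := hproper _ (SimpleGraph.mem_edgeFinset.mpr hadjvu)
              _ (SimpleGraph.mem_edgeFinset.mpr hadjvu') hne2
              ⟨v, Sym2.mem_mk_left _ _, Sym2.mem_mk_left _ _⟩
            exact hcne ((hf2 u hu).symm.trans (heq ▸ hf2 u' hu'))
        set TEbad := TE.filter (fun g => ¬∃ u ∈ N, c g = c s(v, u)) with hTEbad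
        have hWsub : Finset.univ.filter (fun t => ∃ e ∈ HE, t ∈ e ∧ c e ∈ S) ⊆
            TEbad.biUnion eset := by
          intro t ht
          obtain ⟨hh, hhHE, hth, hcS⟩ := (Finset.mem_filter.mp ht).2
          obtain ⟨z, hhz⟩ := Sym2.mem_iff_exists.mp hth
          have htz : t ≠ z := fun hc =>
            (SimpleGraph.not_isDiag_of_mem_edgeSet G
              (SimpleGraph.mem_edgeFinset.mp (hHEG _ hhHE)))
              (by rw [hhz, hc]; exact Sym2.mk_isDiag_iff.mpr rfl)
          have htv : t ≠ v := fun hc => hHEv _ hhHE (hc ▸ hth)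
          have hzv : z ≠ v := fun hc => hHEv _ hhHE (hhz ▸ hc ▸ Sym2.mem_mk_right _ _)
          obtain ⟨g, hgTE, htg, hgcut⟩ := lfirstEdge hTacyc (hTconn' t z htv hzv) htz
          refine Finset.mem_biUnion.mpr ⟨g, ?_, mem_eset.mpr htg⟩
          refine Finset.mem_filter.mpr ⟨hgTE, ?_⟩
          rintro ⟨u, huN, hcg⟩
          exact hgcut (hC hh hhHE t z hhz hcS u huN g hgTE hcg)
        have h5 := Finset.card_le_card hWsub
        have h6 := card_biUnion_eset_le TEbad
        have hbadcard : TEbad.card + TEgood.card = TE.card := by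
          rw [hTEbad, hTEgood, Finset.filter_not, Finset.card_sdiff_of_subset (Finset.filter_subset _ _)]
          have := Finset.card_le_card (Finset.filter_subset
            (fun g => ∃ u ∈ N, c g = c s(v, u)) TE)
          omega
        have c1 : ((Finset.univ.filter
            (fun t => ∃ e ∈ HE, t ∈ e ∧ c e ∈ S)).card : ℝ) ≤ 2 * TEbad.card := by
          exact_mod_cast h5.trans h6
        have c2 : (TEbad.card : ℝ) + TEgood.card = TE.card := by exact_mod_cast hbadcard
        have c3 : (N.card : ℝ) ≤ TEgood.card := by exact_mod_cast hgoodcard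
        have c4 : (TE.card : ℝ) + 2 = n := by exact_mod_cast hTEcard
        linarith [hWcard, hNreal]
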